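/- arXiv:2404.05868 — 2 statements merged into one kernel-verified Lean document; each statement's English description precedes it below -/
import Mathlib

section
/- Let β, η > 0 with η·C_b·β ≤ 1 for some constant C_b ≥ C_a > 0, and consider a sequence b^{(0)} = 0, b^{(t+1)} = b^{(t)} - η·w_t where C_a·exp(β·b^{(t)}) ≤ w_t ≤ C_b·exp(β·b^{(t)}) for all t. Suppose b satisfies the comparison with the ODE solutions: then b^{(t)} ≥ -(1/β)·log(β·C_b·(1+exp(η·C_b))·η·t + 1) for all t ≥ 0. -/
lemma exp_le_one_add_sub_mul {x : ℝ} (h0 : 0 ≤ x) (h1 : x ≤ 1) :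
    Real.exp x ≤ 1 + (Real.exp 1 - 1) * x := by
  have h := convexOn_exp.2 (Set.mem_univ (0:ℝ)) (Set.mem_univ (1:ℝ))
    (by linarith : (0:ℝ) ≤ 1 - x) h0 (by ring)
  simp only [smul_eq_mul, mul_zero, mul_one, zero_add] at h
  rw [Real.exp_zero] at h
  linarith

theorem npo_log_lower_bound (β η Ca Cb : ℝ) (hβ : 0 < β) (hη : 0 < η)
    (hCa : 0 < Ca) (hCab : Ca ≤ Cb) (hstep : η * Cb * β ≤ 1)
    (w : ℕ → ℝ) (b : ℕ → ℝ) (hb0 : b 0 = 0)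
    (hb : ∀ t, b (t + 1) = b t - η * w t)
    (hw : ∀ t, Ca * Real.exp (β * b t) ≤ w t ∧ w t ≤ Cb * Real.exp (β * b t)) :
    ∀ t : ℕ,
      b t ≥ -(1 / β) * Real.log (β * Cb * (1 + Real.exp (η * Cb)) * η * t + 1) := by
  have hCb : 0 < Cb := lt_of_lt_of_le hCa hCab
  have key : ∀ t : ℕ, b t ≤ 0 ∧
      Real.exp (-(β * b t)) ≤ β * Cb * (1 + Real.exp (η * Cb)) * η * t + 1 := by
    intro t
    induction t with
    | zero => simp [hb0]
    | succ t ih =>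
      obtain ⟨hble, hyle⟩ := ih
      have hwpos : 0 < w t :=
        lt_of_lt_of_le (by positivity) (hw t).1
      have hbsucc : b (t + 1) ≤ 0 := by
        rw [hb]; nlinarith
      refine ⟨hbsucc, ?_⟩
      have hy1 : 1 ≤ Real.exp (-(β * b t)) :=
        Real.one_le_exp (by nlinarith)
      set E := Real.exp (-(β * b t)) with hE
      set x := β * η * w t with hx
      have hx0 : 0 ≤ x := by positivity
      have hxE : x * E ≤ β * η * Cb := by
        have h2 := (hw t).2
        have hEpos : 0 < Real.exp (β * b t) := Real.exp_pos _
        have : E * Real.exp (β * b t) = 1 := by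
          rw [hE, ← Real.exp_add]; simp
        nlinarith [mul_le_mul_of_nonneg_left h2 (by positivity : (0:ℝ) ≤ β * η * E)]
      have hx1 : x ≤ 1 := by nlinarith
      have hconv : Real.exp x ≤ 1 + (Real.exp 1 - 1) * x :=
        exp_le_one_add_sub_mul hx0 hx1
      have heq : Real.exp (-(β * b (t + 1))) = E * Real.exp x := by
        rw [hE, ← Real.exp_add, hb]; ring_nf; rw [hx]
      have hEpos : 0 < E := Real.exp_pos _
      have he1 : Real.exp 1 - 1 ≤ 1 + Real.exp (η * Cb) := by
        have h1 : Real.exp 1 < 2.7182818286 := Real.exp_one_lt_d9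
        have h2 : (1:ℝ) ≤ Real.exp (η * Cb) := Real.one_le_exp (by positivity)
        linarith
      have hxE' : 0 ≤ x * E := mul_nonneg hx0 hEpos.le
      have step : E * Real.exp x ≤ E + (1 + Real.exp (η * Cb)) * (β * η * Cb) := by
        have h3 : E * Real.exp x ≤ E * (1 + (Real.exp 1 - 1) * x) :=
          mul_le_mul_of_nonneg_left hconv hEpos.le
        have h4 : E * (1 + (Real.exp 1 - 1) * x) = E + (Real.exp 1 - 1) * (x * E) := by ring
        have h5 : (Real.exp 1 - 1) * (x * E) ≤ (1 + Real.exp (η * Cb)) * (β * η * Cb) := by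
          have he0 : 0 ≤ Real.exp 1 - 1 := by
            have := Real.one_le_exp (le_of_lt one_pos)
            linarith
          calc (Real.exp 1 - 1) * (x * E) ≤ (1 + Real.exp (η * Cb)) * (x * E) :=
                mul_le_mul_of_nonneg_right he1 hxE'
            _ ≤ (1 + Real.exp (η * Cb)) * (β * η * Cb) := by
                have : (0:ℝ) ≤ 1 + Real.exp (η * Cb) := by positivity
                exact mul_le_mul_of_nonneg_left hxE this
        linarith
      rw [heq]
      push_cast
      calc E * Real.exp x ≤ E + (1 + Real.exp (η * Cb)) * (β * η * Cb) := step
        _ ≤ (β * Cb * (1 + Real.exp (η * Cb)) * η * t + 1)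
              + (1 + Real.exp (η * Cb)) * (β * η * Cb) := by linarith
        _ = β * Cb * (1 + Real.exp (η * Cb)) * η * (t + 1) + 1 := by ring
  intro t
  obtain ⟨hble, hyle⟩ := key t
  have hLpos : 0 < β * Cb * (1 + Real.exp (η * Cb)) * η * t + 1 := by positivity
  have hlog : -(β * b t) ≤ Real.log (β * Cb * (1 + Real.exp (η * Cb)) * η * t + 1) := by
    have := Real.log_le_log (Real.exp_pos _) hyle
    rwa [Real.log_exp] at this
  rw [ge_iff_le, neg_mul, neg_le]
  calc -b t = (1 / β) * (-(β * b t)) := by field_simp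
    _ ≤ 1 / β * Real.log (β * Cb * (1 + Real.exp (η * Cb)) * η * t + 1) :=
        mul_le_mul_of_nonneg_left hlog (by positivity)
end

section
/- Let b : [0, ∞) → ℝ be differentiable with b(0) = 0 and suppose b'(t) ≤ -c·exp(β·b(t)) for all t ≥ 0, with constants c, β > 0. Then b(t) ≤ -(1/β)·log(β·c·t + 1) for all t ≥ 0. -/
theorem ode_comparison_upper (c β : ℝ) (hc : 0 < c) (hβ : 0 < β)
    (b b' : ℝ → ℝ) (hb0 : b 0 = 0)
    (hderiv : ∀ t ≥ (0 : ℝ), HasDerivAt b (b' t) t)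
    (hle : ∀ t ≥ (0 : ℝ), b' t ≤ -c * Real.exp (β * b t)) :
    ∀ t ≥ (0 : ℝ), b t ≤ -(1 / β) * Real.log (β * c * t + 1) := by
  set F : ℝ → ℝ := fun t => Real.exp (-(β * b t)) - β * c * t with hF
  have hFderiv : ∀ t ≥ (0 : ℝ),
      HasDerivAt F (-(β * b' t * Real.exp (-(β * b t))) - β * c) t := by
    intro t ht
    have h1 : HasDerivAt (fun t => Real.exp (-(β * b t)))
        (-(β * b' t * Real.exp (-(β * b t)))) t := by
      have := ((hderiv t ht).const_mul (-β)).exp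
      simpa [mul_comm] using this
    have h2 := h1.sub ((hasDerivAt_id t).const_mul (β * c))
    simp only [mul_one] at h2
    exact h2
  have hmono : MonotoneOn F (Set.Ici (0 : ℝ)) := by
    apply monotoneOn_of_deriv_nonneg (convex_Ici 0)
    · intro t ht
      exact (hFderiv t ht).continuousAt.continuousWithinAt
    · intro t ht
      rw [interior_Ici] at ht
      exact (hFderiv t (le_of_lt ht)).differentiableAt.differentiableWithinAt
    · intro t ht
      rw [interior_Ici] at ht
      have ht' : (0 : ℝ) ≤ t := le_of_lt ht
      rw [(hFderiv t ht').deriv]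
      have hb' := hle t ht'
      have hexp : Real.exp (β * b t) * Real.exp (-(β * b t)) = 1 := by
        rw [← Real.exp_add]; ring_nf; exact Real.exp_zero
      have hpos : 0 < Real.exp (-(β * b t)) := Real.exp_pos _
      have h2 : c * Real.exp (β * b t) ≤ -b' t := by linarith
      have h3 := mul_le_mul_of_nonneg_right h2 hpos.le
      rw [mul_assoc, hexp, mul_one] at h3
      nlinarith [mul_le_mul_of_nonneg_left h3 hβ.le]
  intro t ht
  have hFt : (1 : ℝ) ≤ F t := by
    have := hmono (Set.self_mem_Ici) ht ht
    simpa [hF, hb0] using this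
  have hlb : β * c * t + 1 ≤ Real.exp (-(β * b t)) := by
    simp only [hF] at hFt; linarith
  have hpos : 0 < β * c * t + 1 := by positivity
  have hlog : Real.log (β * c * t + 1) ≤ -(β * b t) := by
    calc Real.log (β * c * t + 1) ≤ Real.log (Real.exp (-(β * b t))) :=
          Real.log_le_log hpos hlb
      _ = -(β * b t) := Real.log_exp _
  have h4 : Real.log (β * c * t + 1) / β ≤ -b t :=
    (div_le_iff₀ hβ).mpr (by linarith)
  have heq : -(1 / β) * Real.log (β * c * t + 1)
      = -(Real.log (β * c * t + 1) / β) := by ring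
  rw [heq]
  linarith
end
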